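/- arXiv:1903.08123 — 3 statements merged into one kernel-verified Lean document; each statement's English description precedes it below -/
import Mathlib

section
/- Let G be a residually finite, finitely generated solvable group, let N be a nilpotent normal subgroup of G, let m > 1, and let x be a nontrivial element of γ_m(N). Let p be a prime and set α = (lcm{1, 2, …, p−1})^(m+2). If x^α ≠ 1, then D_G(x^α) ≥ p^(m+1); that is, every finite group H admitting a surjective homomorphism φ: G → H with φ(x^α) ≠ 1 satisfies |H| ≥ p^(m+1). -/
open Function

/-- The depth of an element: the minimal order of a finite quotient witnessing it. -/
noncomputable def depth {G : Type*} [Group G] (x : G) : ℕ∞ :=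
  sInf {d : ℕ∞ | ∃ (H : Type) (_ : Group H) (_ : Fintype H) (φ : G →* H),
    Surjective φ ∧ φ x ≠ 1 ∧ (Fintype.card H : ℕ∞) = d}

/-- Residual finiteness. -/
def ResiduallyFinite (G : Type*) [Group G] : Prop :=
  ∀ x : G, x ≠ 1 → ∃ (H : Type) (_ : Group H) (_ : Fintype H) (φ : G →* H),
    Surjective φ ∧ φ x ≠ 1

/-- `γ_m(N)` (with `γ_1(N) = N`) as a subgroup of the ambient group. -/
def gammaSub {G : Type*} [Group G] (N : Subgroup G) (m : ℕ) : Subgroup G :=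
  ((⊤ : Subgroup ↥N).lowerCentralSeries (m - 1)).map N.subtype

/-- `lcm {1, …, k}` -/
def lcmUpTo (k : ℕ) : ℕ := (Finset.Icc 1 k).lcm id


private lemma lcs_succ_comm {G : Type*} [Group G] (n : ℕ) :
    Subgroup.lowerCentralSeries (⊤ : Subgroup G) (n + 1) = ⁅Subgroup.lowerCentralSeries (⊤ : Subgroup G) n, (⊤ : Subgroup G)⁆ := by
  rw [Subgroup.commutator_def, lowerCentralSeries_succ]
  simp only [commutatorElement_def]
  rfl

private lemma lcs_stab {G : Type*} [Group G] [hG : Group.IsNilpotent G] {i : ℕ}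
    (h : Subgroup.lowerCentralSeries (⊤ : Subgroup G) i ≤ Subgroup.lowerCentralSeries (⊤ : Subgroup G) (i + 1)) :
    Subgroup.lowerCentralSeries (⊤ : Subgroup G) i = ⊥ := by
  have key : ∀ k, Subgroup.lowerCentralSeries (⊤ : Subgroup G) i ≤ Subgroup.lowerCentralSeries (⊤ : Subgroup G) (i + k) := by
    intro k
    induction k with
    | zero => exact le_rfl
    | succ k ih =>
      calc Subgroup.lowerCentralSeries (⊤ : Subgroup G) i ≤ Subgroup.lowerCentralSeries (⊤ : Subgroup G) (i + 1) := h
        _ = ⁅Subgroup.lowerCentralSeries (⊤ : Subgroup G) i, ⊤⁆ := lcs_succ_comm i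
        _ ≤ ⁅Subgroup.lowerCentralSeries (⊤ : Subgroup G) (i + k), ⊤⁆ := Subgroup.commutator_mono ih le_rfl
        _ = Subgroup.lowerCentralSeries (⊤ : Subgroup G) (i + k + 1) := (lcs_succ_comm _).symm
  obtain ⟨n, hn⟩ := nilpotent_iff_lowerCentralSeries.mp hG
  refine le_bot_iff.mp ?_
  calc Subgroup.lowerCentralSeries (⊤ : Subgroup G) i ≤ Subgroup.lowerCentralSeries (⊤ : Subgroup G) (i + n) := key n
    _ ≤ Subgroup.lowerCentralSeries (⊤ : Subgroup G) n := lowerCentralSeries_antitone _ (by omega)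
    _ = ⊥ := le_bot_iff.mp (le_of_eq hn)

open scoped commutatorElement in
private lemma commutator_eq_bot_of_cyclic_abelianization {P : Type*} [Group P]
    [Group.IsNilpotent P] (hc : IsCyclic (P ⧸ Subgroup.lowerCentralSeries (⊤ : Subgroup P) 1)) :
    Subgroup.lowerCentralSeries (⊤ : Subgroup P) 1 = ⊥ := by
  have hle : Subgroup.lowerCentralSeries (⊤ : Subgroup P) 2 ≤
      (Subgroup.lowerCentralSeries (⊤ : Subgroup P) 1).comap (MonoidHom.id P) := by
    simpa using lowerCentralSeries_antitone _ (show 1 ≤ 2 by omega)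
  set g : (P ⧸ Subgroup.lowerCentralSeries (⊤ : Subgroup P) 2) →* (P ⧸ Subgroup.lowerCentralSeries (⊤ : Subgroup P) 1) :=
    QuotientGroup.map _ _ (MonoidHom.id P) hle with hg
  have hker : g.ker ≤ Subgroup.center (P ⧸ Subgroup.lowerCentralSeries (⊤ : Subgroup P) 2) := by
    intro a ha
    obtain ⟨xx, rfl⟩ := QuotientGroup.mk'_surjective (Subgroup.lowerCentralSeries (⊤ : Subgroup P) 2) a
    have hx1 : xx ∈ Subgroup.lowerCentralSeries (⊤ : Subgroup P) 1 := by
      have := ha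
      rw [MonoidHom.mem_ker, hg, QuotientGroup.map_mk'] at this
      exact (QuotientGroup.eq_one_iff xx).mp this
    rw [Subgroup.mem_center_iff]
    intro b
    obtain ⟨yy, rfl⟩ := QuotientGroup.mk'_surjective (Subgroup.lowerCentralSeries (⊤ : Subgroup P) 2) b
    have hcomm : ⁅xx, yy⁆ ∈ Subgroup.lowerCentralSeries (⊤ : Subgroup P) 2 := by
      rw [lcs_succ_comm]
      exact Subgroup.commutator_mem_commutator hx1 (Subgroup.mem_top yy)
    have h1 : ⁅(QuotientGroup.mk' (Subgroup.lowerCentralSeries (⊤ : Subgroup P) 2)) xx,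
        (QuotientGroup.mk' (Subgroup.lowerCentralSeries (⊤ : Subgroup P) 2)) yy⁆ = 1 := by
      rw [← map_commutatorElement]
      exact (QuotientGroup.eq_one_iff _).mpr hcomm
    have := commutatorElement_eq_one_iff_commute.mp h1
    exact this.symm.eq
  have hcomm : ∀ a b : P ⧸ Subgroup.lowerCentralSeries (⊤ : Subgroup P) 2, a * b = b * a := by
    haveI := hc
    exact commutative_of_cyclic_center_quotient g hker
  have hQ : Subgroup.lowerCentralSeries (⊤ : Subgroup (P ⧸ Subgroup.lowerCentralSeries (⊤ : Subgroup P) 2)) 1 = ⊥ := by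
    rw [lowerCentralSeries_one, commutator_def,
      Subgroup.commutator_eq_bot_iff_le_centralizer]
    intro a _
    rw [Subgroup.mem_centralizer_iff]
    intro b _
    exact hcomm b a
  have h12 : Subgroup.lowerCentralSeries (⊤ : Subgroup P) 1 ≤ Subgroup.lowerCentralSeries (⊤ : Subgroup P) 2 := by
    intro xx hxx
    have hmem : (QuotientGroup.mk' (Subgroup.lowerCentralSeries (⊤ : Subgroup P) 2)) xx ∈
        Subgroup.lowerCentralSeries (⊤ : Subgroup (P ⧸ Subgroup.lowerCentralSeries (⊤ : Subgroup P) 2)) 1 :=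
      lowerCentralSeries.map _ 1 (Subgroup.mem_map_of_mem _ hxx)
    rw [hQ, Subgroup.mem_bot] at hmem
    exact (QuotientGroup.eq_one_iff xx).mp hmem
  exact lcs_stab h12

private lemma card_mul_le_of_not_le {P : Type*} [Group P] [Finite P] {q : ℕ} (hq : q.Prime)
    (hP : IsPGroup q P) {A B : Subgroup P} (hAB : A ≤ B) (hnot : ¬ B ≤ A) :
    q * Nat.card A ≤ Nat.card B := by
  haveI : Fact q.Prime := ⟨hq⟩
  obtain ⟨n, hn⟩ := IsPGroup.iff_card.mp hP
  set C := A.subgroupOf B with hC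
  have hcardC : Nat.card C = Nat.card A :=
    Nat.card_congr (Subgroup.subgroupOfEquivOfLe hAB).toEquiv
  have hmul : Nat.card C * C.index = Nat.card B := Subgroup.card_mul_index C
  have hdvd : C.index ∣ q ^ n := by
    refine dvd_trans (Subgroup.index_dvd_card C) ?_
    rw [← hn]
    exact Subgroup.card_subgroup_dvd_card B
  obtain ⟨j, _, hj⟩ := (Nat.dvd_prime_pow hq).mp hdvd
  have hne1 : C.index ≠ 1 := by
    intro h
    exact hnot (Subgroup.subgroupOf_eq_top.mp (Subgroup.index_eq_one.mp h))
  have hj1 : 1 ≤ j := by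
    rcases Nat.eq_zero_or_pos j with h0 | h
    · subst h0; rw [pow_zero] at hj; exact absurd hj hne1
    · exact h
  have hq_le : q ≤ C.index := by
    rw [hj]
    calc q = q ^ 1 := (pow_one q).symm
      _ ≤ q ^ j := Nat.pow_le_pow_right hq.pos hj1
  calc q * Nat.card A = q * Nat.card C := by rw [hcardC]
    _ ≤ C.index * Nat.card C := Nat.mul_le_mul_right _ hq_le
    _ = Nat.card B := by rw [mul_comm]; exact hmul

private lemma card_top_step {P : Type*} [Group P] [Finite P] {q : ℕ} (hq : q.Prime)
    (hP : IsPGroup q P) (hbot : Subgroup.lowerCentralSeries (⊤ : Subgroup P) 1 ≠ ⊥) :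
    q ^ 2 * Nat.card (Subgroup.lowerCentralSeries (⊤ : Subgroup P) 1) ≤ Nat.card P := by
  haveI : Fact q.Prime := ⟨hq⟩
  haveI : Group.IsNilpotent P := hP.isNilpotent
  set H := Subgroup.lowerCentralSeries (⊤ : Subgroup P) 1 with hH
  have hmul : Nat.card H * H.index = Nat.card P := Subgroup.card_mul_index H
  obtain ⟨n, hn⟩ := IsPGroup.iff_card.mp hP
  have hidx : H.index ∣ q ^ n := by
    rw [← hn]; exact Subgroup.index_dvd_card H
  obtain ⟨j, _, hj⟩ := (Nat.dvd_prime_pow hq).mp hidx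
  have h2j : 2 ≤ j := by
    by_contra hlt
    push_neg at hlt
    have hcyc : IsCyclic (P ⧸ H) := by
      interval_cases j
      · have hcard1 : Nat.card (P ⧸ H) = 1 := by
          rw [← Subgroup.index_eq_card, hj, pow_zero]
        haveI : Subsingleton (P ⧸ H) := (Nat.card_eq_one_iff_unique.mp hcard1).1
        infer_instance
      · exact isCyclic_of_prime_card (p := q)
          (by rw [← Subgroup.index_eq_card, hj, pow_one])
    exact hbot (commutator_eq_bot_of_cyclic_abelianization hcyc)
  have hq2 : q ^ 2 ≤ H.index := by
    rw [hj]; exact Nat.pow_le_pow_right hq.pos h2j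
  calc q ^ 2 * Nat.card H ≤ H.index * Nat.card H := Nat.mul_le_mul_right _ hq2
    _ = Nat.card P := by rw [mul_comm]; exact hmul

private lemma card_bound {P : Type*} [Group P] [Finite P] {q : ℕ} (hq : q.Prime)
    (hP : IsPGroup q P) {n c : ℕ} (hn : 1 ≤ n) {u : P}
    (hu : u ∈ Subgroup.lowerCentralSeries (⊤ : Subgroup P) n) (huo : orderOf u = q ^ c) (hc : 1 ≤ c) :
    q ^ (n + 1 + c) ≤ Nat.card P := by
  haveI : Fact q.Prime := ⟨hq⟩
  haveI : Group.IsNilpotent P := hP.isNilpotent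
  have hu1 : u ≠ 1 := by
    intro h
    rw [h, orderOf_one] at huo
    have : 1 < q ^ c := Nat.one_lt_pow (by omega) hq.one_lt
    omega
  have hnbot : Subgroup.lowerCentralSeries (⊤ : Subgroup P) n ≠ ⊥ := by
    intro h
    exact hu1 (Subgroup.mem_bot.mp (h ▸ hu))
  have hbase : q ^ c ≤ Nat.card (Subgroup.lowerCentralSeries (⊤ : Subgroup P) n) := by
    calc q ^ c = Nat.card (Subgroup.zpowers u) := by rw [Nat.card_zpowers, huo]
      _ ≤ _ := Subgroup.card_le_of_le (Subgroup.zpowers_le.mpr hu)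
  have key : ∀ d, d ≤ n - 1 → q ^ (d + c) ≤ Nat.card (Subgroup.lowerCentralSeries (⊤ : Subgroup P) (n - d)) := by
    intro d
    induction d with
    | zero => intro _; simpa using hbase
    | succ d ih =>
      intro hd
      have hd' : d ≤ n - 1 := by omega
      have hstep : ¬ Subgroup.lowerCentralSeries (⊤ : Subgroup P) (n - d - 1) ≤ Subgroup.lowerCentralSeries (⊤ : Subgroup P) (n - d) := by
        intro hle
        have heq : n - d = (n - d - 1) + 1 := by omega
        have hb : Subgroup.lowerCentralSeries (⊤ : Subgroup P) (n - d - 1) = ⊥ := by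
          apply lcs_stab
          rw [← heq]
          exact hle
        apply hnbot
        refine le_bot_iff.mp ?_
        rw [← hb]
        exact lowerCentralSeries_antitone _ (by omega)
      have hAB : Subgroup.lowerCentralSeries (⊤ : Subgroup P) (n - d) ≤ Subgroup.lowerCentralSeries (⊤ : Subgroup P) (n - d - 1) :=
        lowerCentralSeries_antitone _ (by omega)
      have hmul := card_mul_le_of_not_le hq hP hAB hstep
      calc q ^ (d + 1 + c) = q * q ^ (d + c) := by ring
        _ ≤ q * Nat.card (Subgroup.lowerCentralSeries (⊤ : Subgroup P) (n - d)) := Nat.mul_le_mul_left q (ih hd')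
        _ ≤ Nat.card (Subgroup.lowerCentralSeries (⊤ : Subgroup P) (n - d - 1)) := hmul
        _ = Nat.card (Subgroup.lowerCentralSeries (⊤ : Subgroup P) (n - (d + 1))) := by
            rw [show n - d - 1 = n - (d + 1) by omega]
  have h1 : q ^ (n - 1 + c) ≤ Nat.card (Subgroup.lowerCentralSeries (⊤ : Subgroup P) 1) := by
    have := key (n - 1) le_rfl
    rwa [show n - (n - 1) = 1 by omega] at this
  have hbot1 : Subgroup.lowerCentralSeries (⊤ : Subgroup P) 1 ≠ ⊥ := by
    intro h
    apply hnbot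
    refine le_bot_iff.mp ?_
    rw [← h]
    exact lowerCentralSeries_antitone _ hn
  have h2 := card_top_step hq hP hbot1
  calc q ^ (n + 1 + c) = q ^ 2 * q ^ (n - 1 + c) := by
        rw [← pow_add]
        congr 1
        omega
    _ ≤ q ^ 2 * Nat.card (Subgroup.lowerCentralSeries (⊤ : Subgroup P) 1) := Nat.mul_le_mul_left _ h1
    _ ≤ Nat.card P := h2

private lemma lcmUpTo_ne_zero (k : ℕ) : lcmUpTo k ≠ 0 := by
  intro h
  rw [lcmUpTo, Finset.lcm_eq_zero_iff] at h
  simp at h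

private lemma arith_bound {p q m c : ℕ} (hp : p.Prime) (hq : q.Prime) (hm : 1 ≤ m) (hc : 1 ≤ c)
    (hnd : ¬ q ^ c ∣ lcmUpTo (p - 1) ^ (m + 2)) : p ^ (m + 1) ≤ q ^ (m + c) := by
  rcases le_or_gt p q with hpq | hqp
  · calc p ^ (m + 1) ≤ q ^ (m + 1) := Nat.pow_le_pow_left hpq _
      _ ≤ q ^ (m + c) := Nat.pow_le_pow_right hq.pos (by omega)
  · set L := lcmUpTo (p - 1) with hL
    have hL0 : L ≠ 0 := lcmUpTo_ne_zero _
    have hmem : q ∈ Finset.Icc 1 (p - 1) :=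
      Finset.mem_Icc.mpr ⟨hq.one_lt.le, by omega⟩
    have hqL : q ∣ L := Finset.dvd_lcm hmem
    set v := L.factorization q with hv
    have hv1 : 1 ≤ v := hq.factorization_pos_of_dvd hL0 hqL
    have hvc : (m + 2) * v + 1 ≤ c := by
      by_contra hcon
      push_neg at hcon
      apply hnd
      calc q ^ c ∣ q ^ ((m + 2) * v) := pow_dvd_pow q (by omega)
        _ = (q ^ v) ^ (m + 2) := by rw [← pow_mul, mul_comm]
        _ ∣ L ^ (m + 2) := pow_dvd_pow_of_dvd (Nat.ordProj_dvd L q) _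
    have hple : p ≤ q ^ (v + 1) := by
      by_contra hcon
      push_neg at hcon
      have hmem2 : q ^ (v + 1) ∈ Finset.Icc 1 (p - 1) :=
        Finset.mem_Icc.mpr ⟨Nat.one_le_pow _ _ hq.pos, by omega⟩
      have hdv : q ^ (v + 1) ∣ L := Finset.dvd_lcm hmem2
      have := (Nat.Prime.pow_dvd_iff_le_factorization hq hL0).mp hdv
      omega
    calc p ^ (m + 1) ≤ (q ^ (v + 1)) ^ (m + 1) := Nat.pow_le_pow_left hple _
      _ = q ^ ((v + 1) * (m + 1)) := by rw [← pow_mul]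
      _ ≤ q ^ (m + c) := Nat.pow_le_pow_right hq.pos (by nlinarith)

/-- for a residually finite, finitely generated solvable `G`, a nilpotent normal
`N ⊴ G`, `m > 1`, a nontrivial `x ∈ γ_m(N)`, a prime `p`, and
`α = (lcm {1, …, p-1})^(m+2)`: if `x^α ≠ 1` then `D_G(x^α) ≥ p^(m+1)`, i.e. every finite group
`H` with a surjection `φ : G → H` such that `φ(x^α) ≠ 1` has `|H| ≥ p^(m+1)`. -/
theorem depth_lower_bound_nilpotent_depth {G : Type*} [Group G]
    (hRF : ResiduallyFinite G) (hFG : Group.FG G) (hsolv : IsSolvable G)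
    (N : Subgroup G) (hN : N.Normal) (hNnilp : Group.IsNilpotent N)
    (m : ℕ) (hm : 1 < m) (x : G) (hx : x ≠ 1) (hxγ : x ∈ gammaSub N m)
    (p : ℕ) (hp : p.Prime)
    (hxα : x ^ (lcmUpTo (p - 1) ^ (m + 2)) ≠ 1) :
    ((p : ℕ∞) ^ (m + 1) ≤ depth (x ^ (lcmUpTo (p - 1) ^ (m + 2)))) ∧
    (∀ (H : Type) [Group H] [Fintype H] (φ : G →* H), Surjective φ →
      φ (x ^ (lcmUpTo (p - 1) ^ (m + 2))) ≠ 1 → p ^ (m + 1) ≤ Fintype.card H) := by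
  set α := lcmUpTo (p - 1) ^ (m + 2) with hαdef
  have main : ∀ (H : Type) [Group H] [Fintype H] (φ : G →* H), Surjective φ →
      φ (x ^ α) ≠ 1 → p ^ (m + 1) ≤ Fintype.card H := by
    intro H _ _ φ hsurj hφ
    classical
    set K : Subgroup H := N.map φ with hK
    haveI := hNnilp
    haveI : Group.IsNilpotent ↥K :=
      nilpotent_of_surjective (φ.subgroupMap N) (φ.subgroupMap_surjective N)
    obtain ⟨x', hx', hxx'⟩ := Subgroup.mem_map.mp hxγ
    set ψ := φ.subgroupMap N with hψ
    set y : ↥K := ψ x' with hy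
    have hyH : (y : H) = φ x := by
      have : (y : H) = φ (x' : G) := rfl
      rw [this, ← hxx']
      rfl
    have hyγ : y ∈ Subgroup.lowerCentralSeries (⊤ : Subgroup ↥K) (m - 1) :=
      lowerCentralSeries.map ψ (m - 1) (Subgroup.mem_map_of_mem ψ hx')
    have hz : y ^ α ≠ 1 := by
      intro h
      apply hφ
      have hcoe : ((y ^ α : ↥K) : H) = φ (x ^ α) := by
        push_cast [hyH]
        rw [map_pow]
      rw [← hcoe, h]
      rfl
    have htfae := (isNilpotent_of_finite_tfae (G := ↥K)).out 0 3
    have hsylow := htfae.mp inferInstance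
    set e := Sylow.directProductOfNormal (G := ↥K)
      (fun {q} [hq : Fact q.Prime] Q => hsylow q hq Q) with he
    have hz' : e.symm (y ^ α) ≠ 1 := by
      intro h
      apply hz
      have := congrArg e h
      simpa using this
    obtain ⟨q0, hq0⟩ : ∃ q0, e.symm (y ^ α) q0 ≠ 1 := by
      by_contra hcon
      push_neg at hcon
      exact hz' (funext fun q0 => hcon q0)
    obtain ⟨Q0, hQ0⟩ : ∃ Q0, e.symm (y ^ α) q0 Q0 ≠ 1 := by
      by_contra hcon
      push_neg at hcon
      exact hq0 (funext fun Q0 => hcon Q0)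
    haveI hqF : Fact (q0 : ℕ).Prime := ⟨Nat.prime_of_mem_primeFactors q0.2⟩
    set η : ↥K →* ↥(Q0 : Subgroup ↥K) :=
      (Pi.evalMonoidHom _ Q0).comp ((Pi.evalMonoidHom _ q0).comp e.symm.toMonoidHom)
      with hη
    set u := η y with hu
    have huγ : u ∈ Subgroup.lowerCentralSeries (⊤ : Subgroup ↥(Q0 : Subgroup ↥K)) (m - 1) :=
      lowerCentralSeries.map η (m - 1) (Subgroup.mem_map_of_mem η hyγ)
    have huα : u ^ α ≠ 1 := by
      have hhh : u ^ α = η (y ^ α) := (map_pow η y α).symm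
      rw [hhh]
      exact hQ0
    have hPG : IsPGroup (q0 : ℕ) ↥(Q0 : Subgroup ↥K) := Q0.isPGroup'
    obtain ⟨k, hk⟩ := hPG u
    obtain ⟨c, hck, hc⟩ := (Nat.dvd_prime_pow hqF.out).mp (orderOf_dvd_of_pow_eq_one hk)
    have hc1 : 1 ≤ c := by
      rcases Nat.eq_zero_or_pos c with h0 | h
      · exfalso
        apply huα
        rw [h0, pow_zero] at hc
        rw [orderOf_eq_one_iff.mp hc, one_pow]
      · exact h
    have hnd : ¬ (q0 : ℕ) ^ c ∣ α := by
      intro hdvd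
      apply huα
      rw [← hc] at hdvd
      exact orderOf_dvd_iff_pow_eq_one.mp hdvd
    have hmn : 1 ≤ m - 1 := by omega
    have hbound := card_bound hqF.out hPG hmn huγ hc hc1
    have harith := arith_bound hp hqF.out (by omega : 1 ≤ m) hc1 hnd
    have hfin : p ^ (m + 1) ≤ Nat.card ↥(Q0 : Subgroup ↥K) := by
      refine harith.trans ?_
      rwa [show m - 1 + 1 + c = m + c by omega] at hbound
    calc p ^ (m + 1) ≤ Nat.card ↥(Q0 : Subgroup ↥K) := hfin
      _ ≤ Nat.card ↥K := Subgroup.card_le_card_group _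
      _ ≤ Nat.card H := Subgroup.card_le_card_group _
      _ = Fintype.card H := Nat.card_eq_fintype_card
  refine ⟨?_, main⟩
  apply le_sInf
  rintro d ⟨H, _, _, φ, hsurj, hne, rfl⟩
  have hcard := main H φ hsurj hne
  exact_mod_cast hcard
end

section
/- In the Baumslag–Solitar group BS(1,m) = ⟨a, t | t a t⁻¹ = aᵐ⟩ with m ≥ 2, equipped with the generating set S = {a, t}, the element a has infinite order and the cyclic subgroup ⟨a⟩ is strictly exponentially distorted: there is a constant C > 0 such that for all integers n ≥ 2, (1/C)·log n ≤ ‖aⁿ‖_S ≤ C·log n. -/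
open Function

/-- Word length with respect to a finite generating set `S`. -/
noncomputable def wordLength {G : Type*} [Group G] (S : Finset G) (x : G) : ℕ :=
  sInf {n | ∃ l : List G, (∀ g ∈ l, g ∈ S ∨ g⁻¹ ∈ S) ∧ l.length = n ∧ l.prod = x}

/-- The defining relation `t a t⁻¹ a⁻ᵐ` of `BS(1,m)`, with `false ↦ a` and `true ↦ t`. -/
def BSRel (m : ℕ) : Set (FreeGroup Bool) :=
  {FreeGroup.of true * FreeGroup.of false * (FreeGroup.of true)⁻¹ *
    (FreeGroup.of false) ^ (-(m : ℤ))}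

/-- The Baumslag–Solitar group `BS(1,m) = ⟨a, t ∣ t a t⁻¹ = aᵐ⟩`. -/
def BS (m : ℕ) : Type := PresentedGroup (BSRel m)

instance (m : ℕ) : Group (BS m) := by unfold BS; infer_instance

/-- The generator `a` of `BS(1,m)`. -/
def BSa (m : ℕ) : BS m := PresentedGroup.of false

/-- The generator `t` of `BS(1,m)`. -/
def BSt (m : ℕ) : BS m := PresentedGroup.of true

/-- The generating set `S = {a, t}` of `BS(1,m)`. -/
noncomputable def BSGenSet (m : ℕ) : Finset (BS m) :=
  letI := Classical.decEq (BS m)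
  {BSa m, BSt m}

open Matrix

section WordAux

variable {G : Type*} [Group G] (S : Finset G)

/-- `x` is represented by a word of length `n` over `S ∪ S⁻¹`. -/
def WordProp (x : G) (n : ℕ) : Prop :=
  ∃ l : List G, (∀ g ∈ l, g ∈ S ∨ g⁻¹ ∈ S) ∧ l.length = n ∧ l.prod = x

lemma wordLength_eq (x : G) : wordLength S x = sInf {n | WordProp S x n} := rfl

lemma wordProp_one : WordProp S (1 : G) 0 := ⟨[], by simp, by simp, by simp⟩

lemma wordProp_mul {x y : G} {p q : ℕ} (hx : WordProp S x p) (hy : WordProp S y q) :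
    WordProp S (x * y) (p + q) := by
  obtain ⟨l1, h1, h1l, h1p⟩ := hx
  obtain ⟨l2, h2, h2l, h2p⟩ := hy
  exact ⟨l1 ++ l2, by intro g hg; rcases List.mem_append.mp hg with h | h; exacts [h1 g h, h2 g h],
    by simp [h1l, h2l], by simp [List.prod_append, h1p, h2p]⟩

lemma wordProp_of_mem {g : G} (h : g ∈ S) : WordProp S g 1 :=
  ⟨[g], by simpa using Or.inl h, rfl, by simp⟩

lemma wordProp_of_inv_mem {g : G} (h : g⁻¹ ∈ S) : WordProp S g 1 :=
  ⟨[g], by simpa using Or.inr h, rfl, by simp⟩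

lemma wordProp_pow {g : G} (h : WordProp S g 1) (k : ℕ) : WordProp S (g ^ k) k := by
  induction k with
  | zero => simpa using wordProp_one S
  | succ n ih => simpa [pow_succ] using wordProp_mul S ih h

lemma wordLength_le {x : G} {n : ℕ} (h : WordProp S x n) : wordLength S x ≤ n :=
  Nat.sInf_le h

lemma wordProp_wordLength {x : G} (h : ∃ n, WordProp S x n) :
    WordProp S x (wordLength S x) :=
  Nat.sInf_mem h

end WordAux

noncomputable section BSAux

abbrev BSMat := Matrix (Fin 2) (Fin 2) ℝ

def BSAU : BSMatˣ :=
  ⟨!![1,1;0,1], !![1,-1;0,1],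
   by simp [Matrix.mul_fin_two, Matrix.one_fin_two],
   by simp [Matrix.mul_fin_two, Matrix.one_fin_two]⟩

def BSTU (x : ℝˣ) : BSMatˣ :=
  ⟨!![(x:ℝ),0;0,1], !![((x⁻¹:ℝˣ):ℝ),0;0,1],
   by simp [Matrix.mul_fin_two, Matrix.one_fin_two],
   by simp [Matrix.mul_fin_two, Matrix.one_fin_two]⟩

lemma BSAU_pow (k : ℕ) : ((BSAU ^ k : BSMatˣ) : BSMat) = !![1,(k:ℝ);0,1] := by
  induction k with
  | zero => simp [Matrix.one_fin_two]
  | succ n ih =>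
      rw [pow_succ, Units.val_mul, ih]
      show !![1,(n:ℝ);0,1] * (BSAU : BSMat) = _
      simp [BSAU, Matrix.mul_fin_two]
      ring_nf

def BSum (m : ℕ) (hm : 2 ≤ m) : ℝˣ :=
  Units.mk0 (m : ℝ) (Nat.cast_ne_zero.mpr (by omega))

def BSf (m : ℕ) (hm : 2 ≤ m) : Bool → BSMatˣ := fun b => if b then BSTU (BSum m hm) else BSAU

lemma BSrel_holds (m : ℕ) (hm : 2 ≤ m) :
    ∀ r ∈ BSRel m, FreeGroup.lift (BSf m hm) r = 1 := by
  intro r hr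
  simp only [BSRel, Set.mem_singleton_iff] at hr
  subst hr
  simp only [_root_.map_mul, _root_.map_inv, _root_.map_zpow, FreeGroup.lift_apply_of, BSf]
  simp only [if_pos, if_neg, Bool.false_eq_true, ite_true, ite_false]
  rw [_root_.zpow_neg, zpow_natCast, mul_inv_eq_one, mul_inv_eq_iff_eq_mul]
  ext : 1
  rw [Units.val_mul, Units.val_mul, BSAU_pow]
  show (!![((BSum m hm :ℝˣ):ℝ),0;0,1] * !![1,1;0,1] : BSMat) = !![1,(m:ℝ);0,1] * !![((BSum m hm :ℝˣ):ℝ),0;0,1]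
  have h1 : ((BSum m hm : ℝˣ) : ℝ) = (m : ℝ) := rfl
  rw [h1]
  simp [Matrix.mul_fin_two]

/-- The homomorphism `BS m →* BSMatˣ`. -/
def BSφ (m : ℕ) (hm : 2 ≤ m) : BS m →* BSMatˣ :=
  PresentedGroup.toGroup (BSrel_holds m hm)

lemma BSφ_a (m : ℕ) (hm : 2 ≤ m) : BSφ m hm (BSa m) = BSAU :=
  PresentedGroup.toGroup.of _

lemma BSφ_t (m : ℕ) (hm : 2 ≤ m) : BSφ m hm (BSt m) = BSTU (BSum m hm) :=
  PresentedGroup.toGroup.of _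

/-- The defining relation, inside `BS m`. -/
lemma BS_rel (m : ℕ) : BSt m * BSa m * (BSt m)⁻¹ = (BSa m) ^ m := by
  have h : PresentedGroup.mk (BSRel m)
      (FreeGroup.of true * FreeGroup.of false * (FreeGroup.of true)⁻¹ *
        (FreeGroup.of false) ^ (-(m : ℤ))) = 1 := by
    apply (QuotientGroup.eq_one_iff _).mpr
    exact Subgroup.subset_normalClosure (Set.mem_singleton _)
  simp only [_root_.map_mul, _root_.map_inv, _root_.map_zpow] at h
  rw [_root_.zpow_neg, zpow_natCast, mul_inv_eq_one] at h
  exact h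

end BSAux

section Bounds

lemma BSa_mem (m : ℕ) : BSa m ∈ BSGenSet m := by
  classical
  simp [BSGenSet]

lemma BSt_mem (m : ℕ) : BSt m ∈ BSGenSet m := by
  classical
  simp [BSGenSet]

lemma BS_upper (m : ℕ) (hm : 2 ≤ m) :
    ∀ n : ℕ, ∃ k, WordProp (BSGenSet m) ((BSa m) ^ n) k ∧ k ≤ (m + 2) * (Nat.log m n + 1) := by
  intro n
  induction n using Nat.strong_induction_on with
  | _ n ih =>
    rcases Nat.eq_zero_or_pos n with h0 | h0
    · subst h0
      exact ⟨0, by simpa using wordProp_one (BSGenSet m), by positivity⟩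
    rcases lt_or_ge n m with hnm | hnm
    · -- direct word aⁿ
      refine ⟨n, wordProp_pow _ (wordProp_of_mem _ (BSa_mem m)) n, ?_⟩
      nlinarith [Nat.log m n]
    · -- recursion: aⁿ = a^(n % m) * (t * (a^(n/m) * t⁻¹))
      have hq : n / m < n := Nat.div_lt_self h0 (by omega)
      obtain ⟨k, hk, hkb⟩ := ih (n / m) hq
      have key : (BSa m) ^ n = (BSa m) ^ (n % m) * (BSt m * ((BSa m) ^ (n / m) * (BSt m)⁻¹)) := by
        have conj : BSt m * (BSa m) ^ (n / m) * (BSt m)⁻¹ = (BSa m) ^ (m * (n / m)) := by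
          rw [← conj_pow, BS_rel m, ← pow_mul]
        calc (BSa m) ^ n = (BSa m) ^ (n % m + m * (n / m)) := by rw [Nat.mod_add_div]
        _ = (BSa m) ^ (n % m) * (BSa m) ^ (m * (n / m)) := pow_add _ _ _
        _ = _ := by rw [← conj]; simp [mul_assoc]
      have w : WordProp (BSGenSet m) ((BSa m) ^ n) (n % m + (1 + (k + 1))) := by
        rw [key]
        refine wordProp_mul _ (wordProp_pow _ (wordProp_of_mem _ (BSa_mem m)) _) ?_
        refine wordProp_mul _ (wordProp_of_mem _ (BSt_mem m)) ?_
        refine wordProp_mul _ hk (wordProp_of_inv_mem _ ?_)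
        simpa using BSt_mem m
      refine ⟨_, w, ?_⟩
      have hlog : Nat.log m n = Nat.log m (n / m) + 1 := by
        have h1 := Nat.log_div_base m n
        have h2 : 0 < Nat.log m n := Nat.log_pos (by omega) hnm
        omega
      have hr : n % m < m := Nat.mod_lt _ (by omega)
      rw [hlog]
      nlinarith
end Bounds

lemma mem_BSGenSet_iff {m : ℕ} {x : BS m} : x ∈ BSGenSet m ↔ x = BSa m ∨ x = BSt m := by
  classical
  simp [BSGenSet]

lemma BS_lower (m : ℕ) (hm : 2 ≤ m) (l : List (BS m))
    (hl : ∀ g ∈ l, g ∈ BSGenSet m ∨ g⁻¹ ∈ BSGenSet m) :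
    ∃ u b : ℝ, ((BSφ m hm l.prod : BSMatˣ) : BSMat) = !![u, b; 0, 1] ∧
      |b| ≤ (2 * m : ℝ) ^ l.length := by
  induction l with
  | nil => exact ⟨1, 0, by simp [Matrix.one_fin_two], by simp⟩
  | cons g l ih =>
    obtain ⟨u, b, hval, hb⟩ := ih (fun x hx => hl x (List.mem_cons_of_mem g hx))
    have hpow1 : (1 : ℝ) ≤ (2 * m : ℝ) ^ l.length := by
      apply one_le_pow₀
      have : (2:ℝ) ≤ (m:ℝ) := by exact_mod_cast hm
      linarith
    have hm4 : (4 : ℝ) ≤ (2 * m : ℝ) := by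
      have : (2:ℝ) ≤ (m:ℝ) := by exact_mod_cast hm
      linarith
    have hbn := abs_nonneg b
    have hstep : ((BSφ m hm (g :: l).prod : BSMatˣ) : BSMat) =
        ((BSφ m hm g : BSMatˣ) : BSMat) * !![u, b; 0, 1] := by
      rw [List.prod_cons, _root_.map_mul, Units.val_mul, hval]
    rcases hl g List.mem_cons_self with hg | hg <;>
      rcases mem_BSGenSet_iff.mp hg with h | h
    · -- g = a
      have : g = BSa m := h
      refine ⟨u, b + 1, ?_, ?_⟩
      · rw [hstep, this, BSφ_a]
        show (!![1,1;0,1] : BSMat) * _ = _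
        simp [Matrix.mul_fin_two]
      · have := abs_add_le b 1
        simp only [List.length_cons, pow_succ]
        rw [abs_one] at this
        nlinarith
    · -- g = t
      have : g = BSt m := h
      refine ⟨(m:ℝ) * u, (m:ℝ) * b, ?_, ?_⟩
      · rw [hstep, this, BSφ_t]
        show (!![(m:ℝ),0;0,1] : BSMat) * _ = _
        simp [Matrix.mul_fin_two]
      · rw [abs_mul, Nat.abs_cast]
        simp only [List.length_cons, pow_succ]
        have hmr : (0:ℝ) ≤ (m:ℝ) := Nat.cast_nonneg m
        nlinarith
    · -- g⁻¹ = a, so g = a⁻¹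
      have hgi : g = (BSa m)⁻¹ := by rw [← h]; simp
      refine ⟨u, b - 1, ?_, ?_⟩
      · rw [hstep, hgi, _root_.map_inv, BSφ_a]
        show (!![1,-1;0,1] : BSMat) * _ = _
        simp [Matrix.mul_fin_two]
        ring_nf
      · have := abs_sub b 1
        simp only [List.length_cons, pow_succ]
        rw [abs_one] at this
        nlinarith
    · -- g⁻¹ = t, so g = t⁻¹
      have hgi : g = (BSt m)⁻¹ := by rw [← h]; simp
      refine ⟨(m:ℝ)⁻¹ * u, (m:ℝ)⁻¹ * b, ?_, ?_⟩
      · rw [hstep, hgi, _root_.map_inv, BSφ_t]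
        show (!![((m:ℝ))⁻¹,0;0,1] : BSMat) * _ = _
        simp [Matrix.mul_fin_two]
      · rw [abs_mul, abs_inv, Nat.abs_cast]
        have hmr : (1:ℝ) ≤ (m:ℝ) := by exact_mod_cast (by omega : 1 ≤ m)
        have hinv : (m:ℝ)⁻¹ ≤ 1 := by
          rw [inv_le_one_iff₀]; right; exact hmr
        have hinvn : (0:ℝ) ≤ (m:ℝ)⁻¹ := by positivity
        simp only [List.length_cons, pow_succ]
        nlinarith


set_option maxHeartbeats 1000000 in
/-- in `BS(1,m)` with `m ≥ 2` and `S = {a, t}`, the element `a` has infinite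
order and `⟨a⟩` is strictly exponentially distorted:
`(1/C) log n ≤ ‖aⁿ‖_S ≤ C log n` for all integers `n ≥ 2`. -/
theorem BS_exponential_distortion (m : ℕ) (hm : 2 ≤ m) :
    ¬ IsOfFinOrder (BSa m) ∧
    ∃ C : ℝ, 0 < C ∧ ∀ n : ℤ, 2 ≤ n →
      (1 / C) * Real.log n ≤ (wordLength (BSGenSet m) ((BSa m) ^ n) : ℝ) ∧
        (wordLength (BSGenSet m) ((BSa m) ^ n) : ℝ) ≤ C * Real.log n := by
  have hm2 : (2:ℝ) ≤ (m:ℝ) := by exact_mod_cast hm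
  constructor
  · -- infinite order
    intro hfin
    obtain ⟨k, hk, hk1⟩ := isOfFinOrder_iff_pow_eq_one.mp hfin
    have h1 : (BSφ m hm (BSa m)) ^ k = 1 := by
      rw [← _root_.map_pow, hk1, _root_.map_one]
    rw [BSφ_a] at h1
    have h2 : ((BSAU ^ k : BSMatˣ) : BSMat) = 1 := by rw [h1]; rfl
    rw [BSAU_pow, Matrix.one_fin_two] at h2
    have h3 : (k : ℝ) = 0 := by
      have := congrFun (congrFun h2 0) 1
      simpa using this
    exact absurd (Nat.cast_eq_zero.mp h3) (by omega)
  · refine ⟨4 * ((m:ℝ) + 2) + 2 * m, by positivity, ?_⟩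
    set C : ℝ := 4 * ((m:ℝ) + 2) + 2 * m with hC
    have hCpos : 0 < C := by positivity
    intro n hn
    set N : ℕ := n.toNat with hN
    have hn0 : (0:ℤ) ≤ n := by omega
    have hN2 : 2 ≤ N := by omega
    have hzp : (BSa m) ^ n = (BSa m) ^ N := by
      rw [← Int.toNat_of_nonneg hn0, zpow_natCast]
    have hcast : ((n:ℤ):ℝ) = (N:ℝ) := by
      rw [← Int.toNat_of_nonneg hn0]; push_cast; rfl
    rw [hzp, hcast]
    obtain ⟨k, hk, hkb⟩ := BS_upper m hm N
    set W : ℕ := wordLength (BSGenSet m) ((BSa m) ^ N) with hW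
    have hWk : W ≤ k := wordLength_le _ hk
    obtain ⟨l, hlmem, hlen, hprod⟩ := wordProp_wordLength _ ⟨k, hk⟩
    obtain ⟨u, b, hval, hb⟩ := BS_lower m hm l hlmem
    rw [hprod] at hval
    have hAN : ((BSφ m hm ((BSa m) ^ N) : BSMatˣ) : BSMat) = !![1, (N:ℝ); 0, 1] := by
      rw [_root_.map_pow, BSφ_a, BSAU_pow]
    have heq : (!![u, b; 0, 1] : BSMat) = !![1, (N:ℝ); 0, 1] := hval.symm.trans hAN
    have hbN : b = (N:ℝ) := by
      have := congrFun (congrFun heq 0) 1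
      simpa using this
    rw [hlen] at hb
    have hNle : (N:ℝ) ≤ (2 * m : ℝ) ^ W := by
      rw [← hbN]
      exact (le_abs_self b).trans hb
    -- real log facts
    have hlogN0 : 0 < Real.log N := Real.log_pos (by exact_mod_cast by omega : (1:ℝ) < N)
    have hlog2 : (0.6931471803 : ℝ) < Real.log 2 := Real.log_two_gt_d9
    have hlog2N : Real.log 2 ≤ Real.log N := Real.log_le_log (by norm_num)
      (by exact_mod_cast hN2)
    constructor
    · -- lower bound
      have h1 : Real.log N ≤ (W:ℝ) * Real.log (2 * m) := by
        calc Real.log N ≤ Real.log ((2 * m : ℝ) ^ W) :=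
              Real.log_le_log (by exact_mod_cast by omega : (0:ℝ) < N) hNle
        _ = (W:ℝ) * Real.log (2 * m) := by rw [Real.log_pow]
      have h2 : Real.log (2 * (m:ℝ)) ≤ C := by
        have := Real.log_le_sub_one_of_pos (by positivity : (0:ℝ) < 2 * m)
        rw [hC]; linarith
      have h3 : Real.log N ≤ (W:ℝ) * C := by
        have hW0 : (0:ℝ) ≤ (W:ℝ) := Nat.cast_nonneg W
        nlinarith [Real.log_pos (by linarith : (1:ℝ) < 2 * m)]
      rw [one_div, inv_mul_le_iff₀ hCpos, mul_comm]
      exact h3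
    · -- upper bound
      have h1 : (W:ℝ) ≤ ((m:ℝ) + 2) * ((Nat.log m N : ℝ) + 1) := by
        have ha : (W:ℝ) ≤ (k:ℝ) := by exact_mod_cast hWk
        have hb' : (k:ℝ) ≤ ((m:ℝ) + 2) * ((Nat.log m N : ℝ) + 1) := by exact_mod_cast hkb
        linarith
      have h2 : (Nat.log m N : ℝ) ≤ Real.logb m N := Real.natLog_le_logb N m
      have h3 : Real.logb m N ≤ Real.log N / Real.log 2 := by
        rw [Real.logb]
        apply div_le_div_of_nonneg_left hlogN0.le (Real.log_pos (by norm_num))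
        exact Real.log_le_log (by norm_num) hm2
      have h4 : Real.log N / Real.log 2 ≤ 2 * Real.log N := by
        rw [div_le_iff₀ (Real.log_pos (by norm_num))]
        nlinarith
      have h5 : (1:ℝ) ≤ 2 * Real.log N := by nlinarith
      have h6 : (Nat.log m N : ℝ) + 1 ≤ 4 * Real.log N := by nlinarith
      calc (W:ℝ) ≤ ((m:ℝ) + 2) * ((Nat.log m N : ℝ) + 1) := h1
      _ ≤ ((m:ℝ) + 2) * (4 * Real.log N) := by nlinarith
      _ ≤ C * Real.log N := by rw [hC]; nlinarith
end

section
/- Let G be a residually finite group with finite generating set S, and suppose G contains an element of infinite order. Then log n ≼ F_{G,S}(n): there is a constant C > 0 such that for every n ≥ 2 there is a nontrivial element g ∈ G with ‖g‖_S ≤ C·n such that every finite group H admitting a surjective homomorphism φ: G → H with φ(g) ≠ 1 satisfies |H| ≥ (log n)/C. -/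
open Function

/-- Any natural number is at most `4 ^ (sqrt m + 1)`. -/
lemma le_four_pow_sqrt_succ (m : ℕ) : m ≤ 4 ^ (Nat.sqrt m + 1) := by
  have h1 : m < (Nat.sqrt m + 1) ^ 2 := Nat.lt_succ_sqrt' m
  have h2 : Nat.sqrt m + 1 < 2 ^ (Nat.sqrt m + 1) := Nat.lt_two_pow_self
  have h3 : ((2 : ℕ) ^ (Nat.sqrt m + 1)) ^ 2 = 4 ^ (Nat.sqrt m + 1) := by
    rw [show (4 : ℕ) = 2 ^ 2 from rfl, ← pow_mul, ← pow_mul, mul_comm]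
  calc m ≤ (Nat.sqrt m + 1) ^ 2 := h1.le
    _ ≤ (2 ^ (Nat.sqrt m + 1)) ^ 2 := Nat.pow_le_pow_left h2.le 2
    _ = 4 ^ (Nat.sqrt m + 1) := h3

/-- `m ^ sqrt m ≤ 16 ^ m`. -/
lemma pow_sqrt_le (m : ℕ) : m ^ Nat.sqrt m ≤ 16 ^ m := by
  have h1 : m ^ Nat.sqrt m ≤ (4 ^ (Nat.sqrt m + 1)) ^ Nat.sqrt m :=
    Nat.pow_le_pow_left (le_four_pow_sqrt_succ m) _
  have h2 : (Nat.sqrt m + 1) * Nat.sqrt m ≤ 2 * m := by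
    have hs : Nat.sqrt m * Nat.sqrt m ≤ m := Nat.sqrt_le m
    have hs' : Nat.sqrt m ≤ m := Nat.sqrt_le_self m
    nlinarith
  calc m ^ Nat.sqrt m ≤ (4 ^ (Nat.sqrt m + 1)) ^ Nat.sqrt m := h1
    _ = 4 ^ ((Nat.sqrt m + 1) * Nat.sqrt m) := by rw [← pow_mul]
    _ ≤ 4 ^ (2 * m) := Nat.pow_le_pow_right (by norm_num) h2
    _ = 16 ^ m := by rw [pow_mul]; norm_num

/-- The lcm of `1, …, m` divides the product of `p ^ (log p m)` over primes `p ≤ m`. -/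
lemma lcmIcc_dvd (m : ℕ) :
    (Finset.Icc 1 m).lcm id ∣
      ∏ p ∈ (Finset.Icc 1 m).filter Nat.Prime, p ^ Nat.log p m := by
  apply Finset.lcm_dvd
  intro k hk
  rw [Finset.mem_Icc] at hk
  obtain ⟨hk1, hkm⟩ := hk
  have hk0 : k ≠ 0 := by omega
  have hm0 : m ≠ 0 := by omega
  have hfac : ∀ p ∈ k.primeFactors, k.factorization p ≤ Nat.log p m := by
    intro p hp
    have hp' : p.Prime := Nat.prime_of_mem_primeFactors hp
    have hdvd : p ^ k.factorization p ∣ k := Nat.ordProj_dvd k p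
    have hle : p ^ k.factorization p ≤ m :=
      le_trans (Nat.le_of_dvd (by omega) hdvd) hkm
    exact (Nat.le_log_iff_pow_le hp'.one_lt hm0).mpr hle
  have hsub : k.primeFactors ⊆ (Finset.Icc 1 m).filter Nat.Prime := by
    intro p hp
    have hp' : p.Prime := Nat.prime_of_mem_primeFactors hp
    have hpk : p ∣ k := Nat.dvd_of_mem_primeFactors hp
    have : p ≤ k := Nat.le_of_dvd (by omega) hpk
    rw [Finset.mem_filter, Finset.mem_Icc]
    exact ⟨⟨hp'.one_lt.le.trans' (by omega), by omega⟩, hp'⟩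
  have hid : (id k : ℕ) = ∏ p ∈ k.primeFactors, p ^ k.factorization p := by
    conv_lhs => rw [show (id k : ℕ) = k from rfl, ← Nat.factorization_prod_pow_eq_self hk0]
    rw [Finsupp.prod, Nat.support_factorization]
  rw [hid]
  calc ∏ p ∈ k.primeFactors, p ^ k.factorization p
      ∣ ∏ p ∈ k.primeFactors, p ^ Nat.log p m :=
        Finset.prod_dvd_prod_of_dvd _ _ (fun p hp => pow_dvd_pow p (hfac p hp))
    _ ∣ ∏ p ∈ (Finset.Icc 1 m).filter Nat.Prime, p ^ Nat.log p m :=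
        Finset.prod_dvd_prod_of_subset _ _ _ hsub

/-- The product of `p ^ (log p m)` over primes `p ≤ m` is at most `64 ^ m`. -/
lemma prod_primePow_le (m : ℕ) :
    ∏ p ∈ (Finset.Icc 1 m).filter Nat.Prime, p ^ Nat.log p m ≤ 64 ^ m := by
  rcases Nat.eq_zero_or_pos m with rfl | hm
  · simp
  set s : Finset ℕ := (Finset.Icc 1 m).filter Nat.Prime with hs
  rw [← Finset.prod_filter_mul_prod_filter_not s (fun p => p * p ≤ m)]
  have h1 : ∏ p ∈ s.filter (fun p => p * p ≤ m), p ^ Nat.log p m ≤ m ^ Nat.sqrt m := by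
    have hcard : (s.filter (fun p => p * p ≤ m)).card ≤ Nat.sqrt m := by
      have hsub : s.filter (fun p => p * p ≤ m) ⊆ Finset.Icc 2 (Nat.sqrt m) := by
        intro p hp
        rw [Finset.mem_filter, hs, Finset.mem_filter] at hp
        obtain ⟨⟨_, hprime⟩, hpp⟩ := hp
        rw [Finset.mem_Icc]
        exact ⟨hprime.two_le, Nat.le_sqrt.mpr hpp⟩
      calc (s.filter (fun p => p * p ≤ m)).card ≤ (Finset.Icc 2 (Nat.sqrt m)).card :=
            Finset.card_le_card hsub
        _ = Nat.sqrt m + 1 - 2 := Nat.card_Icc 2 (Nat.sqrt m)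
        _ ≤ Nat.sqrt m := by omega
    calc ∏ p ∈ s.filter (fun p => p * p ≤ m), p ^ Nat.log p m
        ≤ m ^ (s.filter (fun p => p * p ≤ m)).card :=
          Finset.prod_le_pow_card _ _ _
            (fun p _ => Nat.pow_log_le_self p (by omega))
      _ ≤ m ^ Nat.sqrt m := Nat.pow_le_pow_right (by omega) hcard
  have h2 : ∏ p ∈ s.filter (fun p => ¬ p * p ≤ m), p ^ Nat.log p m ≤ 4 ^ m := by
    have hterm : ∀ p ∈ s.filter (fun p => ¬ p * p ≤ m), p ^ Nat.log p m ≤ p := by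
      intro p hp
      rw [Finset.mem_filter, hs, Finset.mem_filter] at hp
      obtain ⟨⟨_, hprime⟩, hpp⟩ := hp
      have hlog : Nat.log p m ≤ 1 := by
        by_contra hlog
        push_neg at hlog
        have : p ^ 2 ≤ p ^ Nat.log p m := Nat.pow_le_pow_right hprime.pos hlog
        have : p ^ 2 ≤ m := this.trans (Nat.pow_log_le_self p (by omega))
        exact hpp (by nlinarith [sq_nonneg p])
      calc p ^ Nat.log p m ≤ p ^ 1 := Nat.pow_le_pow_right hprime.pos hlog
        _ = p := pow_one p
    have hsub : s.filter (fun p => ¬ p * p ≤ m) ⊆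
        (Finset.range (m + 1)).filter Nat.Prime := by
      intro p hp
      rw [Finset.mem_filter, hs, Finset.mem_filter, Finset.mem_Icc] at hp
      rw [Finset.mem_filter, Finset.mem_range]
      exact ⟨by omega, hp.1.2⟩
    calc ∏ p ∈ s.filter (fun p => ¬ p * p ≤ m), p ^ Nat.log p m
        ≤ ∏ p ∈ s.filter (fun p => ¬ p * p ≤ m), p := Finset.prod_le_prod' hterm
      _ ≤ ∏ p ∈ (Finset.range (m + 1)).filter Nat.Prime, p :=
          Finset.prod_le_prod_of_subset_of_one_le' hsub
            (fun p hp _ => (Nat.prime_of_mem_primesBelow (by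
              rw [Finset.mem_filter] at hp
              exact Nat.mem_primesBelow.mpr ⟨Finset.mem_range.mp hp.1, hp.2⟩)).one_lt.le)
      _ = primorial m := rfl
      _ ≤ 4 ^ m := primorial_le_4_pow m
  calc (∏ p ∈ s.filter (fun p => p * p ≤ m), p ^ Nat.log p m) *
        ∏ p ∈ s.filter (fun p => ¬ p * p ≤ m), p ^ Nat.log p m
      ≤ m ^ Nat.sqrt m * 4 ^ m := Nat.mul_le_mul h1 h2
    _ ≤ 16 ^ m * 4 ^ m := Nat.mul_le_mul_right _ (pow_sqrt_le m)
    _ = 64 ^ m := by rw [← mul_pow]; norm_num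

/-- a residually finite group with an infinite-order element satisfies
`log n ≼ F_{G,S}(n)`. -/
theorem log_lower_bound {G : Type*} [Group G] (S : Finset G)
    (hgen : Subgroup.closure (S : Set G) = ⊤)
    (hRF : ResiduallyFinite G) (x : G) (hx : ¬ IsOfFinOrder x) :
    ∃ C : ℝ, 0 < C ∧ ∀ n : ℕ, 2 ≤ n → ∃ g : G, g ≠ 1 ∧
      (wordLength S g : ℝ) ≤ C * n ∧
      ∀ (H : Type) [Group H] [Fintype H] (φ : G →* H),
        Surjective φ → φ g ≠ 1 → Real.log n / C ≤ Fintype.card H := by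
  -- a word for `x` in the generators
  have hxmem : x ∈ Submonoid.closure ((S : Set G) ∪ (S : Set G)⁻¹) := by
    rw [← Subgroup.closure_toSubmonoid]
    exact hgen ▸ Subgroup.mem_top x
  obtain ⟨l, hl, hlprod⟩ := Submonoid.exists_list_of_mem_closure hxmem
  set w : ℕ := l.length with hw
  have hlog64 : (0 : ℝ) < Real.log 64 := Real.log_pos (by norm_num)
  refine ⟨(w : ℝ) + Real.log 64, by positivity, ?_⟩
  set C : ℝ := (w : ℝ) + Real.log 64 with hC
  have hCpos : 0 < C := by positivity
  intro n hn
  set m : ℕ := Nat.log 64 n with hm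
  set L : ℕ := (Finset.Icc 1 m).lcm id with hLdef
  have hL0 : L ≠ 0 := by
    intro h
    rw [hLdef, Finset.lcm_eq_zero_iff] at h
    obtain ⟨k, hk, hk0⟩ := h
    rw [Finset.mem_Icc] at hk
    simp only [id_eq] at hk0
    omega
  have hLpos : 0 < L := Nat.pos_of_ne_zero hL0
  -- `L ≤ n`
  have hPLpos : 0 < ∏ p ∈ (Finset.Icc 1 m).filter Nat.Prime, p ^ Nat.log p m := by
    apply Finset.prod_pos
    intro p hp
    rw [Finset.mem_filter] at hp
    exact pow_pos hp.2.pos _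
  have hLle : L ≤ n := by
    have h1 : L ≤ 64 ^ m :=
      le_trans (Nat.le_of_dvd hPLpos (lcmIcc_dvd m)) (prod_primePow_le m)
    exact h1.trans (Nat.pow_log_le_self 64 (by omega))
  refine ⟨x ^ L, ?_, ?_, ?_⟩
  · -- nontriviality
    intro h
    exact hx (isOfFinOrder_iff_pow_eq_one.mpr ⟨L, hLpos, h⟩)
  · -- word length bound
    have hword : wordLength S (x ^ L) ≤ L * w := by
      apply Nat.sInf_le
      refine ⟨(List.replicate L l).flatten, ?_, ?_, ?_⟩
      · intro g hg
        rw [List.mem_flatten] at hg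
        obtain ⟨l', hl', hg⟩ := hg
        rw [List.mem_replicate] at hl'
        have hmem := hl g (hl'.2 ▸ hg)
        rcases hmem with h | h
        · exact Or.inl h
        · exact Or.inr (Set.mem_inv.mp h)
      · rw [List.length_flatten, List.map_replicate, List.sum_replicate, smul_eq_mul]
      · rw [List.prod_flatten, List.map_replicate, List.prod_replicate, hlprod]
    calc (wordLength S (x ^ L) : ℝ) ≤ (L * w : ℕ) := by exact_mod_cast hword
      _ = (L : ℝ) * w := by push_cast; ring
      _ ≤ (n : ℝ) * w := by
          apply mul_le_mul_of_nonneg_right _ (by positivity)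
          exact_mod_cast hLle
      _ ≤ C * n := by
          rw [hC]
          have hn0 : (0 : ℝ) ≤ n := by positivity
          nlinarith
  · -- depth bound
    intro H _ _ φ hsurj hφg
    have hcard : m < Fintype.card H := by
      by_contra hle
      push_neg at hle
      have hord1 : 1 ≤ orderOf (φ x) := orderOf_pos (φ x)
      have hord2 : orderOf (φ x) ≤ m :=
        le_trans (Nat.le_of_dvd Fintype.card_pos (orderOf_dvd_card)) hle
      have hdvd : orderOf (φ x) ∣ L := by
        have : orderOf (φ x) ∈ Finset.Icc 1 m := Finset.mem_Icc.mpr ⟨hord1, hord2⟩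
        exact Finset.dvd_lcm this
      have : (φ x) ^ L = 1 := orderOf_dvd_iff_pow_eq_one.mp hdvd
      exact hφg (by rw [map_pow, this])
    have hn64 : (n : ℝ) ≤ (64 : ℝ) ^ (m + 1) := by
      have := (Nat.lt_pow_succ_log_self (by norm_num : 1 < 64) n).le
      exact_mod_cast this
    have hlogn : Real.log n ≤ (m + 1) * Real.log 64 := by
      calc Real.log n ≤ Real.log ((64 : ℝ) ^ (m + 1)) :=
            Real.log_le_log (by positivity) hn64
        _ = (m + 1) * Real.log 64 := by rw [Real.log_pow]; push_cast; ring
    rw [div_le_iff₀ hCpos]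
    have hmcard : ((m : ℝ) + 1) ≤ (Fintype.card H : ℝ) := by exact_mod_cast hcard
    have hlogC : Real.log 64 ≤ C := by rw [hC]; exact le_add_of_nonneg_left (by positivity)
    nlinarith [hlogn, hmcard, hlogC, hlog64, hCpos,
      mul_le_mul_of_nonneg_left hlogC (by positivity : (0:ℝ) ≤ (m:ℝ) + 1),
      mul_le_mul_of_nonneg_right hmcard hCpos.le]
end
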